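/- arXiv:2605.13269 — 6 statements merged into one kernel-verified Lean document; each statement's English description precedes it below -/
import Mathlib

section
/- For every x ∈ ℝ^Ω, every agent i ∈ N and every element e ∈ Ω_i, the partial derivative of the partition multilinear extension satisfies ∂f̃/∂x_e(x) = Σ_{A ∈ I^{-i}} (∏_{j ∈ N, j ≠ i} p_j(A; x)) · (F(A ∪ {e}) − F(A)), where I^{-i} = {A ∈ I : A ∩ Ω_i = ∅} is the family of feasible sets containing no element of block Ω_i. -/
open Finset
open scoped Classical

/-- Feasibility in the partition matroid: at most one element per block. -/
def feasible {N Ω : Type*} [Fintype N] [Fintype Ω] (blk : Ω → N) (A : Finset Ω) : Prop :=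
  ∀ i : N, (A.filter (fun e => blk e = i)).card ≤ 1

/-- Per-agent probability factor `p_i(A; x)`. -/
noncomputable def blockProb {N Ω : Type*} [Fintype N] [Fintype Ω] (blk : Ω → N) (x : Ω → ℝ)
    (A : Finset Ω) (i : N) : ℝ :=
  if A.filter (fun e => blk e = i) = ∅ then
    1 - ∑ e ∈ Finset.univ.filter (fun e => blk e = i), x e
  else ∑ e ∈ A.filter (fun e => blk e = i), x e

/-- The partition multilinear extension. -/
noncomputable def pme {N Ω : Type*} [Fintype N] [Fintype Ω] (blk : Ω → N) (F : Finset Ω → ℝ)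
    (x : Ω → ℝ) : ℝ :=
  ∑ A ∈ Finset.univ.filter (fun A => feasible blk A), F A * ∏ i : N, blockProb blk x A i

/-- Partial derivative of `f` in coordinate `e` at `x`. -/
noncomputable def pderiv {Ω : Type*} (f : (Ω → ℝ) → ℝ) (e : Ω) (x : Ω → ℝ) : ℝ :=
  deriv (fun t : ℝ => f (Function.update x e t)) (x e)


section Aux

variable {N Ω : Type*} [Fintype N] [Fintype Ω]

lemma blockProb_update_ne (blk : Ω → N) (x : Ω → ℝ) (e : Ω) (t : ℝ) (A : Finset Ω)
    {j : N} (hj : blk e ≠ j) :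
    blockProb blk (Function.update x e t) A j = blockProb blk x A j := by
  have key : ∀ (s : Finset Ω),
      ∑ e' ∈ s.filter (fun e' => blk e' = j), Function.update x e t e'
        = ∑ e' ∈ s.filter (fun e' => blk e' = j), x e' := by
    intro s
    refine Finset.sum_congr rfl fun e' he' => ?_
    have h : e' ≠ e := fun h => hj (h ▸ (Finset.mem_filter.mp he').2)
    rw [Function.update_of_ne h]
  unfold blockProb
  split <;> simp [key]

lemma blockProb_insert_ne (blk : Ω → N) (x : Ω → ℝ) (e : Ω) (A : Finset Ω)
    {j : N} (hj : blk e ≠ j) :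
    blockProb blk x (insert e A) j = blockProb blk x A j := by
  unfold blockProb
  rw [Finset.filter_insert, if_neg hj]

end Aux

/-- the partial derivative of the PME in coordinate `e ∈ Ω_i` equals the
sum, over feasible sets `A` avoiding block `Ω_i`, of the product of the other blocks'
probability factors times the marginal gain `F(A ∪ {e}) − F(A)`. -/
theorem pme_gradient {N Ω : Type*} [Fintype N] [Fintype Ω]
    (blk : Ω → N) (hblk : Function.Surjective blk)
    (F : Finset Ω → ℝ) (x : Ω → ℝ) (i : N) (e : Ω) (he : blk e = i) :
    pderiv (pme blk F) e x =
      ∑ A ∈ Finset.univ.filter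
          (fun A => feasible blk A ∧ A.filter (fun e' => blk e' = i) = ∅),
        (∏ j ∈ Finset.univ.erase i, blockProb blk x A j) * (F (insert e A) - F A) := by
  classical
  set Pf : Finset Ω → ℝ := fun A => ∏ j ∈ Finset.univ.erase i, blockProb blk x A j with hPf
  set sl : Finset Ω → ℝ := fun A =>
    if A.filter (fun e' => blk e' = i) = ∅ then (-1 : ℝ) else if e ∈ A then 1 else 0 with hsl
  -- Step 1: the derivative
  have hD : HasDerivAt (fun t => pme blk F (Function.update x e t))
      (∑ A ∈ Finset.univ.filter (fun A => feasible blk A), F A * (sl A * Pf A)) (x e) := by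
    unfold pme
    apply HasDerivAt.fun_sum
    intro A hA
    have hfeas : feasible blk A := (Finset.mem_filter.mp hA).2
    have hfe : ∀ t : ℝ, F A * ∏ j : N, blockProb blk (Function.update x e t) A j
        = F A * (blockProb blk (Function.update x e t) A i * Pf A) := by
      intro t
      rw [← Finset.mul_prod_erase Finset.univ _ (Finset.mem_univ i)]
      congr 1
      congr 1
      refine Finset.prod_congr rfl fun j hj => ?_
      exact blockProb_update_ne blk x e t A (fun h => (Finset.mem_erase.mp hj).1 (he ▸ h).symm)
    have hei : e ∈ Finset.univ.filter (fun e' => blk e' = i) := by simp [he]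
    rcases eq_or_ne (A.filter (fun e' => blk e' = i)) ∅ with hemp | hne
    · -- slope -1
      have hfi : ∀ t : ℝ, blockProb blk (Function.update x e t) A i
          = (1 - ∑ e' ∈ (Finset.univ.filter (fun e' => blk e' = i)).erase e, x e') - t := by
        intro t
        unfold blockProb
        rw [if_pos hemp, ← Finset.add_sum_erase _ _ hei, Function.update_self]
        have hrw : ∑ e' ∈ (Finset.univ.filter (fun e' => blk e' = i)).erase e,
            Function.update x e t e'
            = ∑ e' ∈ (Finset.univ.filter (fun e' => blk e' = i)).erase e, x e' := by
          refine Finset.sum_congr rfl fun e' he' => ?_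
          exact Function.update_of_ne (Finset.mem_erase.mp he').1 _ _
        rw [hrw]; ring
      have hfun : (fun t => F A * ∏ j : N, blockProb blk (Function.update x e t) A j)
          = fun t => F A * (((1 - ∑ e' ∈ (Finset.univ.filter (fun e' => blk e' = i)).erase e,
              x e') - t) * Pf A) := by
        funext t; rw [hfe t, hfi t]
      rw [hfun]
      have hd : HasDerivAt (fun t : ℝ =>
          (1 - ∑ e' ∈ (Finset.univ.filter (fun e' => blk e' = i)).erase e, x e') - t)
          (-1) (x e) := by
        simpa using (hasDerivAt_id (x e)).const_sub
          (1 - ∑ e' ∈ (Finset.univ.filter (fun e' => blk e' = i)).erase e, x e')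
      have h2 := (hd.mul_const (Pf A)).const_mul (F A)
      convert h2 using 1
      · rfl
      rw [hsl]; simp [hemp]
    · rcases em (e ∈ A) with heA | heA
      · -- slope 1
        have hsing : A.filter (fun e' => blk e' = i) = {e} := by
          apply Finset.eq_singleton_iff_unique_mem.mpr
          refine ⟨Finset.mem_filter.mpr ⟨heA, he⟩, fun b hb => ?_⟩
          exact Finset.card_le_one.mp (hfeas i) b hb e (Finset.mem_filter.mpr ⟨heA, he⟩)
        have hfun : (fun t => F A * ∏ j : N, blockProb blk (Function.update x e t) A j)
            = fun t => F A * (t * Pf A) := by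
          funext t
          rw [hfe t]
          congr 2
          unfold blockProb
          rw [if_neg hne, hsing, Finset.sum_singleton, Function.update_self]
        rw [hfun]
        have h2 := ((hasDerivAt_id (x e)).mul_const (Pf A)).const_mul (F A)
        convert h2 using 1
        · rfl
        · rfl
        rw [hsl]; simp [hne, heA]
      · -- slope 0
        have hfun : (fun t => F A * ∏ j : N, blockProb blk (Function.update x e t) A j)
            = fun _ => F A * (blockProb blk x A i * Pf A) := by
          funext t
          rw [hfe t]
          congr 2
          unfold blockProb
          rw [if_neg hne, if_neg hne]
          refine Finset.sum_congr rfl fun e' he' => ?_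
          have h : e' ≠ e := fun h => heA (h ▸ (Finset.mem_filter.mp he').1)
          exact Function.update_of_ne h _ _
        rw [hfun]
        have h2 := hasDerivAt_const (x e) (F A * (blockProb blk x A i * Pf A))
        convert h2 using 1
        rw [hsl]; simp [hne, heA]
  have hderiv : pderiv (pme blk F) e x
      = ∑ A ∈ Finset.univ.filter (fun A => feasible blk A), F A * (sl A * Pf A) := hD.deriv
  rw [hderiv]
  -- Step 2: algebra
  set S := Finset.univ.filter (fun A : Finset Ω => feasible blk A) with hS
  set q : Finset Ω → Prop := fun A => A.filter (fun e' => blk e' = i) = ∅ with hq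
  rw [← Finset.sum_filter_add_sum_filter_not S q (fun A => F A * (sl A * Pf A))]
  have h1 : ∑ A ∈ S.filter q, F A * (sl A * Pf A) = ∑ A ∈ S.filter q, -(F A * Pf A) := by
    refine Finset.sum_congr rfl fun A hA => ?_
    have hqA : A.filter (fun e' => blk e' = i) = ∅ := (Finset.mem_filter.mp hA).2
    rw [hsl]; simp only [if_pos hqA]; ring
  have hsub : S.filter (fun A => e ∈ A) ⊆ S.filter (fun A => ¬ q A) := by
    intro A hA
    obtain ⟨hAS, heA⟩ := Finset.mem_filter.mp hA
    refine Finset.mem_filter.mpr ⟨hAS, fun hqA => ?_⟩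
    have hm : e ∈ A.filter (fun e' => blk e' = i) := Finset.mem_filter.mpr ⟨heA, he⟩
    rw [hq] at hqA; rw [hqA] at hm; simp at hm
  have hzero : ∀ A ∈ S.filter (fun A => ¬ q A), A ∉ S.filter (fun A => e ∈ A)
      → F A * (sl A * Pf A) = 0 := by
    intro A hAt hAs
    have heA : e ∉ A := fun h => hAs (Finset.mem_filter.mpr ⟨(Finset.mem_filter.mp hAt).1, h⟩)
    have hne : ¬ (A.filter (fun e' => blk e' = i) = ∅) := by
      have := (Finset.mem_filter.mp hAt).2; rwa [hq] at this
    rw [hsl]; simp only [if_neg hne, if_neg heA]; ring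
  have h2 : ∑ A ∈ S.filter (fun A => ¬ q A), F A * (sl A * Pf A)
      = ∑ A ∈ S.filter (fun A => e ∈ A), F A * Pf A := by
    rw [← Finset.sum_subset hsub hzero]
    refine Finset.sum_congr rfl fun A hA => ?_
    have heA : e ∈ A := (Finset.mem_filter.mp hA).2
    have hne : ¬ (A.filter (fun e' => blk e' = i) = ∅) := by
      have := (Finset.mem_filter.mp (hsub hA)).2; rwa [hq] at this
    rw [hsl]; simp only [if_neg hne, if_pos heA]; ring
  rw [h1, h2]
  -- bijection between sets containing e and sets avoiding block i
  have hbij : ∑ A ∈ S.filter (fun A => e ∈ A), F A * Pf A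
      = ∑ B ∈ S.filter q, F (insert e B) * Pf B := by
    refine Finset.sum_bij' (fun A _ => A.erase e) (fun B _ => insert e B) ?_ ?_ ?_ ?_ ?_
    · intro A hA
      obtain ⟨hAS, heA⟩ := Finset.mem_filter.mp hA
      have hfeas : feasible blk A := (Finset.mem_filter.mp hAS).2
      refine Finset.mem_filter.mpr ⟨Finset.mem_filter.mpr ⟨Finset.mem_univ _, fun j => ?_⟩, ?_⟩
      · calc ((A.erase e).filter (fun e' => blk e' = j)).card
            ≤ (A.filter (fun e' => blk e' = j)).card := by
              apply Finset.card_le_card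
              rw [Finset.filter_erase]
              exact Finset.erase_subset _ _
          _ ≤ 1 := hfeas j
      · show (A.erase e).filter (fun e' => blk e' = i) = ∅
        rw [Finset.filter_erase]
        have hsing : A.filter (fun e' => blk e' = i) = {e} := by
          apply Finset.eq_singleton_iff_unique_mem.mpr
          refine ⟨Finset.mem_filter.mpr ⟨heA, he⟩, fun b hb => ?_⟩
          exact Finset.card_le_one.mp (hfeas i) b hb e (Finset.mem_filter.mpr ⟨heA, he⟩)
        rw [hsing, Finset.erase_singleton]
    · intro B hB
      obtain ⟨hBS, hqB⟩ := Finset.mem_filter.mp hB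
      have hqB' : B.filter (fun e' => blk e' = i) = ∅ := hqB
      have hfeas : feasible blk B := (Finset.mem_filter.mp hBS).2
      refine Finset.mem_filter.mpr ⟨Finset.mem_filter.mpr ⟨Finset.mem_univ _, fun j => ?_⟩,
        Finset.mem_insert_self e B⟩
      rw [Finset.filter_insert]
      by_cases hj : blk e = j
      · rw [if_pos hj]
        have hBj : B.filter (fun e' => blk e' = j) = ∅ := by
          rw [← hj, he]; exact hqB'
        rw [hBj]; simp
      · rw [if_neg hj]; exact hfeas j
    · intro A hA
      exact Finset.insert_erase (Finset.mem_filter.mp hA).2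
    · intro B hB
      have hqB : B.filter (fun e' => blk e' = i) = ∅ := (Finset.mem_filter.mp hB).2
      have heB : e ∉ B := fun h => by
        have hm : e ∈ B.filter (fun e' => blk e' = i) := Finset.mem_filter.mpr ⟨h, he⟩
        rw [hqB] at hm; simp at hm
      exact Finset.erase_insert heB
    · intro A hA
      obtain ⟨hAS, heA⟩ := Finset.mem_filter.mp hA
      rw [Finset.insert_erase heA]
      congr 1
      rw [hPf]
      refine Finset.prod_congr rfl fun j hj => ?_
      have hj' : blk e ≠ j := fun h => (Finset.mem_erase.mp hj).1 (he ▸ h).symm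
      unfold blockProb
      rw [Finset.filter_erase]
      have hnm : e ∉ A.filter (fun e' => blk e' = j) := fun h =>
        hj' (Finset.mem_filter.mp h).2
      rw [Finset.erase_eq_of_notMem hnm]
  rw [hbij]
  have hfilter : S.filter q = Finset.univ.filter
      (fun A => feasible blk A ∧ A.filter (fun e' => blk e' = i) = ∅) := by
    rw [hS, Finset.filter_filter]
  rw [hfilter]
  rw [← Finset.sum_add_distrib]
  refine Finset.sum_congr rfl fun A hA => ?_
  ring
end

section
/- Let F : 2^Ω → ℝ be normalized, monotone, and submodular. For each i ∈ N let e_i, u_i ∈ Ω_i, set A = {e_i : i ∈ N} and Y = {u_i : i ∈ N}, and write A^{-i} = A \ {e_i}. Then F(Y) − 2·F(A) ≤ Σ_{i ∈ N} [ (F(A^{-i} ∪ {u_i}) − F(A^{-i})) − (F(A^{-i} ∪ {e_i}) − F(A^{-i})) ]. -/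
open Finset
open scoped Classical

/-- Submodularity of a set function. -/
def Submodular {Ω : Type*} [Fintype Ω] (F : Finset Ω → ℝ) : Prop :=
  ∀ A B : Finset Ω, A ⊆ B → ∀ e ∉ B, F (insert e B) - F B ≤ F (insert e A) - F A

lemma sum_marginals_le {Ω : Type*} [Fintype Ω] (F : Finset Ω → ℝ)
    (hnorm : F ∅ = 0) (hsub : Submodular F) :
    ∀ A : Finset Ω, ∑ a ∈ A, (F A - F (A.erase a)) ≤ F A := by
  intro A
  induction A using Finset.induction_on with
  | empty => simp [hnorm]
  | @insert x S hx ih =>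
    rw [Finset.sum_insert hx]
    have herase : (insert x S).erase x = S := Finset.erase_insert hx
    have hstep : ∀ a ∈ S, F (insert x S) - F ((insert x S).erase a)
        ≤ F S - F (S.erase a) := by
      intro a ha
      have hax : a ≠ x := fun h => hx (h ▸ ha)
      have h1 : (insert x S).erase a = insert x (S.erase a) := by
        rw [Finset.erase_insert_of_ne hax.symm]
      have h2 : a ∉ insert x (S.erase a) := by
        simp [hax, Finset.notMem_erase]
      have h3 : S.erase a ⊆ insert x (S.erase a) := Finset.subset_insert _ _
      have := hsub (S.erase a) (insert x (S.erase a)) h3 a h2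
      have hA : insert a (insert x (S.erase a)) = insert x S := by
        rw [Finset.insert_comm, Finset.insert_erase ha]
      have hS : insert a (S.erase a) = S := Finset.insert_erase ha
      rw [hA, hS] at this
      rw [h1]; exact this
    calc F (insert x S) - F ((insert x S).erase x)
          + ∑ a ∈ S, (F (insert x S) - F ((insert x S).erase a))
        ≤ F (insert x S) - F S + ∑ a ∈ S, (F S - F (S.erase a)) := by
          rw [herase]
          exact add_le_add le_rfl (Finset.sum_le_sum hstep)
      _ ≤ F (insert x S) - F S + F S := add_le_add le_rfl ih
      _ = F (insert x S) := by ring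

lemma union_marginals {Ω : Type*} [Fintype Ω] (F : Finset Ω → ℝ)
    (hmono : ∀ A B : Finset Ω, A ⊆ B → F A ≤ F B) (hsub : Submodular F)
    (A : Finset Ω) :
    ∀ Y : Finset Ω, F (A ∪ Y) ≤ F A + ∑ y ∈ Y, (F (insert y A) - F A) := by
  intro Y
  induction Y using Finset.induction_on with
  | empty => simp
  | @insert y S hy ih =>
    rw [Finset.sum_insert hy]
    have h1 : A ∪ insert y S = insert y (A ∪ S) := by
      rw [Finset.union_insert]
    rw [h1]
    have key : F (insert y (A ∪ S)) - F (A ∪ S) ≤ F (insert y A) - F A := by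
      by_cases hyA : y ∈ A ∪ S
      · rw [Finset.insert_eq_self.2 hyA]
        have : F A ≤ F (insert y A) := hmono _ _ (Finset.subset_insert _ _)
        linarith
      · exact hsub A (A ∪ S) Finset.subset_union_left y hyA
    linarith

/-- for a normalized, monotone, submodular `F` and one-element-per-block
selections `A = {e_i}` and `Y = {u_i}`, one has
`F(Y) − 2F(A) ≤ Σ_i [(F(A^{-i} ∪ {u_i}) − F(A^{-i})) − (F(A^{-i} ∪ {e_i}) − F(A^{-i}))]`. -/
theorem deterministic_face_gap {N Ω : Type*} [Fintype N] [Fintype Ω]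
    (blk : Ω → N) (hblk : Function.Surjective blk)
    (F : Finset Ω → ℝ)
    (hnorm : F ∅ = 0)
    (hmono : ∀ A B : Finset Ω, A ⊆ B → F A ≤ F B)
    (hsub : Submodular F)
    (e u : N → Ω) (he : ∀ i, blk (e i) = i) (hu : ∀ i, blk (u i) = i) :
    F (Finset.image u Finset.univ) - 2 * F (Finset.image e Finset.univ) ≤
      ∑ i : N,
        ((F (insert (u i) ((Finset.image e Finset.univ).erase (e i))) -
            F ((Finset.image e Finset.univ).erase (e i))) -
          (F (insert (e i) ((Finset.image e Finset.univ).erase (e i))) -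
            F ((Finset.image e Finset.univ).erase (e i)))) := by
  classical
  set A := Finset.image e Finset.univ with hA
  set Y := Finset.image u Finset.univ with hY
  have einj : Function.Injective e := fun i j h => by
    have := congrArg blk h; rwa [he, he] at this
  have heA : ∀ i, e i ∈ A := fun i => Finset.mem_image_of_mem _ (Finset.mem_univ i)
  -- insert (e i) (A.erase (e i)) = A
  have hins : ∀ i, insert (e i) (A.erase (e i)) = A := fun i =>
    Finset.insert_erase (heA i)
  -- sum of d_i ≤ F A
  have hd : ∑ i : N, (F A - F (A.erase (e i))) ≤ F A := by
    have := sum_marginals_le F hnorm hsub A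
    rwa [hA, Finset.sum_image (fun i _ j _ h => einj h)] at this
  -- termwise bound for u-marginals
  have hterm : ∀ i : N, F (insert (u i) A) - F A ≤
      F (insert (u i) (A.erase (e i))) - F (A.erase (e i)) := by
    intro i
    by_cases huA : u i ∈ A
    · have hue : u i = e i := by
        rcases Finset.mem_image.1 huA with ⟨j, -, hj⟩
        have : j = i := by rw [← he j, hj, hu]
        rw [← hj, this]
      rw [Finset.insert_eq_self.2 huA, hue, hins i]
      have : F (A.erase (e i)) ≤ F A := hmono _ _ (Finset.erase_subset _ _)
      linarith
    · exact hsub (A.erase (e i)) A (Finset.erase_subset _ _) (u i) huA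
  -- F Y ≤ F A + Σ (F (insert (u i) A) - F A)
  have hYle : F Y ≤ F A + ∑ i : N, (F (insert (u i) A) - F A) := by
    have h1 : F Y ≤ F (A ∪ Y) := hmono _ _ Finset.subset_union_right
    have h2 := union_marginals F hmono hsub A Y
    have h3 : ∑ y ∈ Y, (F (insert y A) - F A)
        = ∑ i : N, (F (insert (u i) A) - F A) := by
      rw [hY, Finset.sum_image]
      intro i _ j _ h
      have := congrArg blk h; rwa [hu, hu] at this
    linarith
  have hsum : ∑ i : N, (F (insert (u i) A) - F A) ≤
      ∑ i : N, (F (insert (u i) (A.erase (e i))) - F (A.erase (e i))) :=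
    Finset.sum_le_sum fun i _ => hterm i
  have hrw : ∀ i : N,
      (F (insert (u i) (A.erase (e i))) - F (A.erase (e i))) -
        (F (insert (e i) (A.erase (e i))) - F (A.erase (e i)))
      = (F (insert (u i) (A.erase (e i))) - F (A.erase (e i))) -
        (F A - F (A.erase (e i))) := by
    intro i; rw [hins i]
  rw [Finset.sum_congr rfl fun i _ => hrw i, Finset.sum_sub_distrib]
  linarith
end

section
/- Let F : 2^Ω → ℝ be monotone and submodular. For each i ∈ N let e_i, u_i ∈ Ω_i, set A = {e_i : i ∈ N} and Y = {u_i : i ∈ N}, and write A^{-i} = A \ {e_i}. Then F(Y) − F(A) ≤ Σ_{i ∈ N} [ F(A^{-i} ∪ {u_i}) − F(A^{-i}) ]. -/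
open Finset
open scoped Classical

/-- for a monotone submodular `F` and one-element-per-block selections
`A = {e_i}` and `Y = {u_i}`, one has
`F(Y) − F(A) ≤ Σ_i [F(A^{-i} ∪ {u_i}) − F(A^{-i})]`. -/
theorem add_comparator_bound {N Ω : Type*} [Fintype N] [Fintype Ω]
    (blk : Ω → N) (hblk : Function.Surjective blk)
    (F : Finset Ω → ℝ)
    (hmono : ∀ A B : Finset Ω, A ⊆ B → F A ≤ F B)
    (hsub : Submodular F)
    (e u : N → Ω) (he : ∀ i, blk (e i) = i) (hu : ∀ i, blk (u i) = i) :
    F (Finset.image u Finset.univ) - F (Finset.image e Finset.univ) ≤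
      ∑ i : N,
        (F (insert (u i) ((Finset.image e Finset.univ).erase (e i))) -
          F ((Finset.image e Finset.univ).erase (e i))) := by
  set A := Finset.image e Finset.univ with hA
  -- telescoping bound
  have key : ∀ S : Finset N,
      F (A ∪ S.image u) - F A ≤ ∑ i ∈ S, (F (insert (u i) A) - F A) := by
    intro S
    induction S using Finset.induction with
    | empty => simp
    | insert j S hj ih =>
      rw [Finset.image_insert, Finset.sum_insert hj, Finset.union_insert]
      have h1 : F (insert (u j) (A ∪ S.image u)) - F (A ∪ S.image u) ≤
          F (insert (u j) A) - F A := by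
        by_cases hmem : u j ∈ A ∪ S.image u
        · rw [Finset.insert_eq_self.mpr hmem]
          have := hmono A (insert (u j) A) (Finset.subset_insert _ _)
          linarith
        · exact hsub A (A ∪ S.image u) Finset.subset_union_left (u j) hmem
      linarith
  have h2 : F (Finset.image u Finset.univ) - F A ≤
      ∑ i : N, (F (insert (u i) A) - F A) := by
    have hm := hmono (Finset.image u Finset.univ) (A ∪ Finset.image u Finset.univ)
      Finset.subset_union_right
    have := key Finset.univ
    linarith
  refine h2.trans (Finset.sum_le_sum fun i _ => ?_)
  have heiA : e i ∈ A := Finset.mem_image.mpr ⟨i, Finset.mem_univ i, rfl⟩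
  by_cases hmem : u i ∈ A
  · have hui : u i = e i := by
      obtain ⟨j, -, hj⟩ := Finset.mem_image.mp hmem
      have : j = i := by
        have := congrArg blk hj
        rwa [he, hu] at this
      rw [← hj, this]
    rw [Finset.insert_eq_self.mpr hmem, hui, Finset.insert_erase heiA]
    have := hmono (A.erase (e i)) A (Finset.erase_subset _ _)
    linarith
  · exact hsub (A.erase (e i)) A (Finset.erase_subset _ _) (u i) hmem
end

section
/- Let N be a finite index set, and for each i ∈ N let 𝒜_i be a nonempty finite action set. For each i and a ∈ 𝒜_i, let π^i_a : ℝ^d → ℝ be differentiable with π^i_a(θ) > 0 and Σ_{a ∈ 𝒜_i} π^i_a(θ) = 1 for all θ. Let F assign a real value F(σ) to each joint action σ ∈ ∏_i 𝒜_i, and for each i let F^{-i}(σ) denote a real value depending only on the restriction of σ to N \ {i}; likewise let b_i(σ) be any real value depending only on the restriction of σ to N \ {i}. Define J(θ) = Σ_σ (∏_{i ∈ N} π^i_{σ(i)}(θ))·F(σ). Then the gradient satisfies the score-function identity ∇J(θ) = Σ_σ (∏_{i ∈ N} π^i_{σ(i)}(θ)) · Σ_{i ∈ N} ∇log π^i_{σ(i)}(θ)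 · ( F(σ) − F^{-i}(σ) − b_i(σ) + F^{-i}(σ) ), i.e., ∇J(θ) = Σ_σ (∏_i π^i_{σ(i)}(θ)) · Σ_i ∇log π^i_{σ(i)}(θ) · ( (F(σ) − F^{-i}(σ)) − b_i(σ) ) + Σ_σ (∏_i π^i_{σ(i)}(θ)) · Σ_i ∇log π^i_{σ(i)}(θ) · F^{-i}(σ), where the second sum vanishes; in particular ∇J(θ) = Σ_σ (∏_i π^i_{σ(i)}(θ)) · Σ_i ∇log π^i_{σ(i)}(θ) · ( (F(σ) − F^{-i}(σ)) − b_i(σ) ). -/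
open Finset

/-- score-function policy-gradient identity for a product of categorical
policies.  With `J(θ) = Σ_σ (∏_i π^i_{σ(i)}(θ))·F(σ)`, for any `F^{-i}` and baselines
`b_i` depending only on the restriction of `σ` to `N \ {i}`, the sum
`Σ_σ (∏_i π) Σ_i ∇log π^i_{σ(i)}·F^{-i}(σ)` vanishes and
`∇J(θ) = Σ_σ (∏_i π) Σ_i ∇log π^i_{σ(i)}·((F(σ) − F^{-i}(σ)) − b_i(σ))`. -/
theorem score_function_policy_gradient
    {N : Type*} [Fintype N] [DecidableEq N] {d : ℕ}
    (𝒜 : N → Type*) [∀ i, Fintype (𝒜 i)] [∀ i, Nonempty (𝒜 i)]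
    (p : ∀ i : N, 𝒜 i → (Fin d → ℝ) → ℝ)
    (hdiff : ∀ i a, Differentiable ℝ (p i a))
    (hpos : ∀ i a θ, 0 < p i a θ)
    (hsum : ∀ i θ, ∑ a : 𝒜 i, p i a θ = 1)
    (F : (∀ i, 𝒜 i) → ℝ)
    (Fm : N → (∀ i, 𝒜 i) → ℝ)
    (hFm : ∀ i (σ σ' : ∀ j, 𝒜 j), (∀ j, j ≠ i → σ j = σ' j) → Fm i σ = Fm i σ')
    (b : N → (∀ i, 𝒜 i) → ℝ)
    (hb : ∀ i (σ σ' : ∀ j, 𝒜 j), (∀ j, j ≠ i → σ j = σ' j) → b i σ = b i σ')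
    (J : (Fin d → ℝ) → ℝ)
    (hJ : J = fun θ => ∑ σ : ∀ i, 𝒜 i, (∏ i, p i (σ i) θ) * F σ)
    (θ : Fin d → ℝ) :
    (∑ σ : ∀ i, 𝒜 i, (∏ i, p i (σ i) θ) •
        (∑ i, ((p i (σ i) θ)⁻¹ * Fm i σ) • fderiv ℝ (p i (σ i)) θ) = 0) ∧
    fderiv ℝ J θ =
      ∑ σ : ∀ i, 𝒜 i, (∏ i, p i (σ i) θ) •
        (∑ i, ((p i (σ i) θ)⁻¹ * ((F σ - Fm i σ) - b i σ)) •
          fderiv ℝ (p i (σ i)) θ) := by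
  classical
  -- sum of derivatives of a categorical distribution is zero
  have hDzero : ∀ i : N, ∑ a : 𝒜 i, fderiv ℝ (p i a) θ = 0 := by
    intro i
    have h1 : fderiv ℝ (fun θ => ∑ a : 𝒜 i, p i a θ) θ = ∑ a : 𝒜 i, fderiv ℝ (p i a) θ :=
      fderiv_fun_sum (fun a _ => (hdiff i a).differentiableAt)
    rw [← h1]
    have h2 : (fun θ => ∑ a : 𝒜 i, p i a θ) = fun _ => (1 : ℝ) := funext (hsum i)
    rw [h2, fderiv_const_apply]
  -- the vanishing lemma
  have hvan : ∀ (i : N) (G : (∀ j, 𝒜 j) → ℝ),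
      (∀ σ σ' : ∀ j, 𝒜 j, (∀ j, j ≠ i → σ j = σ' j) → G σ = G σ') →
      ∑ σ : ∀ j, 𝒜 j, (G σ * ∏ j ∈ univ.erase i, p j (σ j) θ) • fderiv ℝ (p i (σ i)) θ
        = 0 := by
    intro i G hG
    set e := Equiv.piSplitAt i 𝒜 with he
    have h1 : ∑ σ : ∀ j, 𝒜 j,
        (G σ * ∏ j ∈ univ.erase i, p j (σ j) θ) • fderiv ℝ (p i (σ i)) θ
        = ∑ x : 𝒜 i × (∀ j : { j // j ≠ i }, 𝒜 j),
          (G (e.symm x) * ∏ j ∈ univ.erase i, p j (e.symm x j) θ) •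
            fderiv ℝ (p i (e.symm x i)) θ :=
      Fintype.sum_equiv e _ _ (fun σ => by rw [Equiv.symm_apply_apply])
    rw [h1, Fintype.sum_prod_type_right]
    refine Finset.sum_eq_zero fun τ _ => ?_
    obtain ⟨a₀⟩ := (inferInstance : Nonempty (𝒜 i))
    have hcoord : ∀ (a : 𝒜 i) (j : N) (h : j ≠ i), e.symm (a, τ) j = τ ⟨j, h⟩ := by
      intro a j h
      simp [he, Equiv.piSplitAt, h]
    have hat : ∀ a : 𝒜 i, e.symm (a, τ) i = a := by
      intro a; simp [he, Equiv.piSplitAt]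
    have hterm : ∀ a : 𝒜 i,
        (G (e.symm (a, τ)) * ∏ j ∈ univ.erase i, p j (e.symm (a, τ) j) θ) •
            fderiv ℝ (p i (e.symm (a, τ) i)) θ
        = (G (e.symm (a₀, τ)) * ∏ j ∈ univ.erase i, p j (e.symm (a₀, τ) j) θ) •
            fderiv ℝ (p i a) θ := by
      intro a
      rw [hat a]
      congr 1
      have hGeq : G (e.symm (a, τ)) = G (e.symm (a₀, τ)) :=
        hG _ _ (fun j hj => by rw [hcoord a j hj, hcoord a₀ j hj])
      have hPeq : ∏ j ∈ univ.erase i, p j (e.symm (a, τ) j) θ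
          = ∏ j ∈ univ.erase i, p j (e.symm (a₀, τ) j) θ :=
        Finset.prod_congr rfl fun j hj => by
          have hji := Finset.ne_of_mem_erase hj
          rw [hcoord a j hji, hcoord a₀ j hji]
      rw [hGeq, hPeq]
    rw [Finset.sum_congr rfl fun a _ => hterm a, ← Finset.smul_sum, hDzero i, smul_zero]
  -- normalization of the sums appearing in the statement
  have hnorm : ∀ (c : N → (∀ j, 𝒜 j) → ℝ),
      ∑ σ : ∀ j, 𝒜 j, (∏ i, p i (σ i) θ) •
          (∑ i, ((p i (σ i) θ)⁻¹ * c i σ) • fderiv ℝ (p i (σ i)) θ)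
      = ∑ i, ∑ σ : ∀ j, 𝒜 j,
          (c i σ * ∏ j ∈ univ.erase i, p j (σ j) θ) • fderiv ℝ (p i (σ i)) θ := by
    intro c
    have hσ : ∀ σ : ∀ j, 𝒜 j, (∏ i, p i (σ i) θ) •
        (∑ i, ((p i (σ i) θ)⁻¹ * c i σ) • fderiv ℝ (p i (σ i)) θ)
        = ∑ i, (c i σ * ∏ j ∈ univ.erase i, p j (σ j) θ) • fderiv ℝ (p i (σ i)) θ := by
      intro σ
      rw [Finset.smul_sum]
      refine Finset.sum_congr rfl fun i _ => ?_
      rw [smul_smul]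
      congr 1
      rw [← Finset.mul_prod_erase univ (fun j => p j (σ j) θ) (mem_univ i)]
      have hne : p i (σ i) θ ≠ 0 := (hpos i (σ i) θ).ne'
      field_simp
    rw [Finset.sum_congr rfl fun σ _ => hσ σ, Finset.sum_comm]
  -- derivative of J
  have hDJ : fderiv ℝ J θ = ∑ σ : ∀ i, 𝒜 i, F σ •
      (∑ i, (∏ j ∈ univ.erase i, p j (σ j) θ) • fderiv ℝ (p i (σ i)) θ) := by
    have h : HasFDerivAt J (∑ σ : ∀ i, 𝒜 i, F σ •
        (∑ i, (∏ j ∈ univ.erase i, p j (σ j) θ) • fderiv ℝ (p i (σ i)) θ)) θ := by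
      rw [hJ]
      exact HasFDerivAt.fun_sum fun σ _ =>
        HasFDerivAt.mul_const
          (HasFDerivAt.finset_prod (fun i _ => ((hdiff i (σ i)) θ).hasFDerivAt)) (F σ)
    exact h.fderiv
  have hmain : ∑ i, ∑ σ : ∀ j, 𝒜 j,
      (F σ * ∏ j ∈ univ.erase i, p j (σ j) θ) • fderiv ℝ (p i (σ i)) θ
      = fderiv ℝ J θ := by
    rw [hDJ, Finset.sum_comm]
    refine Finset.sum_congr rfl fun σ _ => ?_
    rw [Finset.smul_sum]
    exact Finset.sum_congr rfl fun i _ => by rw [smul_smul]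
  constructor
  · rw [hnorm Fm]
    exact Finset.sum_eq_zero fun i _ => hvan i (Fm i) (hFm i)
  · rw [hnorm (fun i σ => (F σ - Fm i σ) - b i σ)]
    have hsplit : ∀ (i : N) (σ : ∀ j, 𝒜 j),
        (((F σ - Fm i σ) - b i σ) * ∏ j ∈ univ.erase i, p j (σ j) θ) •
            fderiv ℝ (p i (σ i)) θ
        = (F σ * ∏ j ∈ univ.erase i, p j (σ j) θ) • fderiv ℝ (p i (σ i)) θ
          - ((Fm i σ + b i σ) * ∏ j ∈ univ.erase i, p j (σ j) θ) •
              fderiv ℝ (p i (σ i)) θ := by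
      intro i σ
      rw [← sub_smul (R := ℝ) (M := (Fin d → ℝ) →L[ℝ] ℝ), ← sub_mul]
      ring_nf
    calc fderiv ℝ J θ
        = ∑ i, ∑ σ : ∀ j, 𝒜 j,
            ((F σ * ∏ j ∈ univ.erase i, p j (σ j) θ) • fderiv ℝ (p i (σ i)) θ
            - ((Fm i σ + b i σ) * ∏ j ∈ univ.erase i, p j (σ j) θ) •
                fderiv ℝ (p i (σ i)) θ) := by
          rw [← hmain]
          refine Finset.sum_congr rfl fun i _ => ?_
          rw [Finset.sum_sub_distrib]
          rw [hvan i (fun σ => Fm i σ + b i σ)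
            (fun σ σ' h => by
              show Fm i σ + b i σ = Fm i σ' + b i σ'
              rw [hFm i σ σ' h, hb i σ σ' h]), sub_zero]
      _ = ∑ i, ∑ σ : ∀ j, 𝒜 j,
            (((F σ - Fm i σ) - b i σ) * ∏ j ∈ univ.erase i, p j (σ j) θ) •
              fderiv ℝ (p i (σ i)) θ := by
          exact Finset.sum_congr rfl fun i _ =>
            Finset.sum_congr rfl fun σ _ => (hsplit i σ).symm
end

section
/- Let C be a nonempty closed convex subset of Euclidean space ℝ^d with diameter at most D (‖u − v‖₂ ≤ D for all u, v ∈ C), let f : ℝ^d → ℝ be differentiable with ‖∇f(x)‖₂ ≤ G for all x ∈ C, and suppose f satisfies the restricted DR first-order gap inequality on C: (1/2)f(y) − f(x) ≤ (1/2)⟨∇f(x), y − x⟩ for all x, y ∈ C. Let x* ∈ C, let K ≥ 1, set η = D/(G·√K) (with G > 0), and let x_0 ∈ C and, for 0 ≤ k < K, let x_{k+1} ∈ C be the Euclidean projection of x_k + η·∇f(x_k) onto C, i.e., ⟨x_k + η·∇f(x_k) − x_{k+1}, y − x_{k+1}⟩ ≤ 0 for all y ∈ C. Then the average iterate value satisfies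 (1/K)·Σ_{k=0}^{K−1} f(x_k) ≥ (1/2)·f(x*) − D·G/(2·√K). -/
open Finset

set_option maxHeartbeats 2000000 in
/-- stagewise approximation guarantee for projected gradient ascent on a
function satisfying the restricted DR first-order gap inequality: with step size
`η = D/(G√K)`, the average iterate value is at least `(1/2)·f(x*) − D·G/(2√K)`. -/
theorem projected_gradient_half_approximation {d : ℕ}
    (C : Set (EuclideanSpace ℝ (Fin d)))
    (hne : C.Nonempty) (hclosed : IsClosed C) (hconv : Convex ℝ C)
    (D G : ℝ) (hG : 0 < G)
    (hdiam : ∀ u ∈ C, ∀ v ∈ C, ‖u - v‖ ≤ D)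
    (f : EuclideanSpace ℝ (Fin d) → ℝ) (hf : Differentiable ℝ f)
    (hgrad : ∀ x ∈ C, ‖gradient f x‖ ≤ G)
    (hDR : ∀ x ∈ C, ∀ y ∈ C,
      (1 / 2) * f y - f x ≤ (1 / 2) * (inner ℝ (gradient f x) (y - x) : ℝ))
    (xstar : EuclideanSpace ℝ (Fin d)) (hxstar : xstar ∈ C)
    (K : ℕ) (hK : 1 ≤ K)
    (η : ℝ) (hη : η = D / (G * Real.sqrt K))
    (x : ℕ → EuclideanSpace ℝ (Fin d)) (hx0 : x 0 ∈ C)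
    (hproj : ∀ k < K, x (k + 1) ∈ C ∧
      ∀ y ∈ C, (inner ℝ (x k + η • gradient f (x k) - x (k + 1)) (y - x (k + 1)) : ℝ) ≤ 0) :
    (1 / 2) * f xstar - D * G / (2 * Real.sqrt K) ≤
      (1 / K) * ∑ k ∈ Finset.range K, f (x k) := by
  have hK0 : (0:ℝ) < K := by exact_mod_cast hK
  set sK := Real.sqrt K with hsKdef
  have hsK0 : 0 < sK := Real.sqrt_pos.2 hK0
  have hsKsq : sK * sK = K := Real.mul_self_sqrt hK0.le
  have hD0 : 0 ≤ D := by
    obtain ⟨u, hu⟩ := hne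
    have := hdiam u hu u hu
    simpa using this
  have hxC : ∀ k, k ≤ K → x k ∈ C := by
    intro k
    induction k with
    | zero => intro _; exact hx0
    | succ n ih => intro h; exact (hproj n (by omega)).1
  have hfstar : 0 ≤ f xstar := by
    have := hDR xstar hxstar xstar hxstar
    simp at this
    linarith
  rcases eq_or_lt_of_le hD0 with hDeq | hDpos
  · -- D = 0 : C is a single point
    have hCeq : ∀ u ∈ C, u = xstar := by
      intro u hu
      have := hdiam u hu xstar hxstar
      rw [← hDeq] at this
      have : ‖u - xstar‖ = 0 := le_antisymm this (norm_nonneg _)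
      have := norm_sub_eq_zero_iff.1 this
      exact this
    have hsum : ∑ k ∈ Finset.range K, f (x k) = K * f xstar := by
      rw [Finset.sum_congr rfl fun k hk => by
        rw [hCeq (x k) (hxC k (Finset.mem_range.1 hk).le)]]
      simp [mul_comm]
    rw [hsum, ← hDeq]
    have : (1:ℝ)/K * (K * f xstar) = f xstar := by field_simp
    rw [this]
    simp
    linarith
  · have hη0 : 0 < η := by
      rw [hη]; positivity
    -- per-step key inequality
    have key : ∀ k < K, η * (inner ℝ (gradient f (x k)) (xstar - x k) : ℝ) ≤
        (‖x k - xstar‖^2 - ‖x (k+1) - xstar‖^2)/2 + η^2 * G^2 / 2 := by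
      intro k hk
      obtain ⟨hmem, hp⟩ := hproj k hk
      have hxk := hxC k hk.le
      set g := gradient f (x k) with hg
      have hgle : ‖g‖ ≤ G := hgrad _ hxk
      have h1 : (inner ℝ (x k + η • g - x (k+1)) (xstar - x (k+1)) : ℝ) ≤ 0 := hp xstar hxstar
      have h3 : (0:ℝ) ≤ inner ℝ (x k + η • g - x (k+1)) (x (k+1) - xstar) := by
        rw [← neg_sub xstar (x (k+1)), inner_neg_right]
        linarith
      have expand : ‖x k + η • g - xstar‖^2 =
          ‖x k + η • g - x (k+1)‖^2
            + 2 * (inner ℝ (x k + η • g - x (k+1)) (x (k+1) - xstar) : ℝ)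
            + ‖x (k+1) - xstar‖^2 := by
        have h := norm_add_sq_real (x k + η • g - x (k+1)) (x (k+1) - xstar)
        rw [sub_add_sub_cancel] at h
        exact h
      have h2 : ‖x (k+1) - xstar‖^2 ≤ ‖x k + η • g - xstar‖^2 := by
        nlinarith [sq_nonneg ‖x k + η • g - x (k+1)‖]
      have expand2 : ‖x k + η • g - xstar‖^2 =
          ‖x k - xstar‖^2 + 2 * (η * (inner ℝ g (x k - xstar) : ℝ)) + η^2 * ‖g‖^2 := by
        have h := norm_add_sq_real (x k - xstar) (η • g)
        rw [sub_add_eq_add_sub] at h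
        rw [h, real_inner_smul_right, real_inner_comm, norm_smul, Real.norm_eq_abs,
          mul_pow, sq_abs]
      have hip : (inner ℝ g (xstar - x k) : ℝ) = - (inner ℝ g (x k - xstar) : ℝ) := by
        rw [← neg_sub (x k) xstar, inner_neg_right]
      rw [hip]
      have hg2 : ‖g‖^2 ≤ G^2 := by nlinarith [norm_nonneg g]
      nlinarith [sq_nonneg η]
    set S := ∑ k ∈ Finset.range K, (inner ℝ (gradient f (x k)) (xstar - x k) : ℝ) with hS
    have sum1 : η * S ≤ D^2/2 + η^2 * K * G^2 / 2 := by
      rw [hS, Finset.mul_sum]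
      calc ∑ k ∈ Finset.range K, η * (inner ℝ (gradient f (x k)) (xstar - x k) : ℝ)
          ≤ ∑ k ∈ Finset.range K,
              ((‖x k - xstar‖^2 - ‖x (k+1) - xstar‖^2)/2 + η^2 * G^2 / 2) :=
            Finset.sum_le_sum fun k hk => key k (Finset.mem_range.1 hk)
        _ = (‖x 0 - xstar‖^2 - ‖x K - xstar‖^2)/2 + K * (η^2 * G^2 / 2) := by
            rw [Finset.sum_add_distrib, ← Finset.sum_div,
              Finset.sum_range_sub' (fun k => ‖x k - xstar‖^2),
              Finset.sum_const, Finset.card_range, nsmul_eq_mul]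
        _ ≤ D^2/2 + η^2 * K * G^2 / 2 := by
            have h0 : ‖x 0 - xstar‖ ≤ D := hdiam _ hx0 _ hxstar
            have h0' : ‖x 0 - xstar‖^2 ≤ D^2 := by nlinarith [norm_nonneg (x 0 - xstar)]
            linarith [sq_nonneg ‖x K - xstar‖, h0']
    have hηD : η * (G * sK) = D := by
      rw [hη, div_mul_cancel₀ _ (by positivity : G * sK ≠ 0)]
    have hηval : η * (D * G * sK) = D^2/2 + η^2 * K * G^2 / 2 := by
      have e1 : η * (D * G * sK) = D * D := by rw [← hηD]; ring
      have e2 : η^2 * ((K:ℝ) * G^2) = D * D := by rw [← hsKsq, ← hηD]; ring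
      nlinarith [e1, e2]
    have hSle : S ≤ D * G * sK := by
      have := sum1
      rw [← hηval] at this
      exact le_of_mul_le_mul_left this hη0
    have sum2 : (K:ℝ) * ((1/2) * f xstar) - ∑ k ∈ Finset.range K, f (x k) ≤
        (1/2) * S := by
      have h := Finset.sum_le_sum (f := fun k => (1/2) * f xstar - f (x k))
        (g := fun k => (1/2) * (inner ℝ (gradient f (x k)) (xstar - x k) : ℝ))
        (s := Finset.range K)
        (fun k hk => hDR _ (hxC k (Finset.mem_range.1 hk).le) _ hxstar)
      rw [Finset.sum_sub_distrib, Finset.sum_const, Finset.card_range, nsmul_eq_mul,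
        ← Finset.mul_sum] at h
      exact h
    set T := ∑ k ∈ Finset.range K, f (x k) with hT
    have hfinal : (K:ℝ) * ((1/2) * f xstar) - T ≤ D * G * sK / 2 := by
      nlinarith [hSle, sum2, hG, hsK0]
    have hDG : D * G / (2 * sK) * K = D * G * sK / 2 := by
      rw [← hsKsq]; field_simp
    have h3 : ((1/2) * f xstar - D * G / (2 * sK)) * K ≤ T := by nlinarith [hfinal, hDG]
    calc (1/2) * f xstar - D * G / (2 * sK)
        = (((1/2) * f xstar - D * G / (2 * sK)) * K) / K := by field_simp
      _ ≤ T / K := by exact (div_le_div_iff_of_pos_right hK0).2 h3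
      _ = (1/K) * T := by ring
end

section
/- Let T ≥ 1, let C_1, …, C_T be nonempty closed convex subsets of Euclidean space ℝ^d with ‖u − v‖₂ ≤ D whenever u ∈ C_t and v ∈ C_s for any t, s ∈ {1,…,T}. For each t, let f_t : ℝ^d → ℝ be differentiable with ‖∇f_t(x)‖₂ ≤ G for all x ∈ C_t, and satisfying the restricted DR first-order gap inequality on C_t: (1/2)f_t(y) − f_t(x) ≤ (1/2)⟨∇f_t(x), y − x⟩ for all x, y ∈ C_t. Fix comparators x_t* ∈ C_t and set the path length P = Σ_{t=1}^{T−1} ‖x_t* − x_{t+1}*‖₂. Fix a constant step size η > 0, let x_1 ∈ C_1, and for each t define x̄_{t+1} as the Euclidean projection of x_t + η·∇f_t(x_t) onto C_t, and (for t < T) x_{t+1} as the Euclidean projection of x̄_{t+1} onto C_{t+1}. Then Σ_{t=1}^{T} [ (1/2)·f_t(x_t*) − f_t(x_t) ] ≤ D²/(4η) + D·P/(2η) + η·T·G²/4. In particular, choosing η = √( D(D + 2P) / (T·G²) ) (with G > 0) gives Σ_{t=1}^{T} [ (1/2)·f_t(x_t*) − f_t(x_t) ] ≤ (1/2)·√(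 D(D + 2P)·T·G² ). -/
open Finset

section Aux
variable {E : Type*} [NormedAddCommGroup E] [InnerProductSpace ℝ E]

lemma aux_proj_sq (z p y : E) (h : (inner ℝ (z - p) (y - p) : ℝ) ≤ 0) :
    ‖p - y‖ ^ 2 ≤ ‖z - y‖ ^ 2 := by
  have key := norm_add_sq_real (z - p) (p - y)
  have h2 : (inner ℝ (z - p) (p - y) : ℝ) = - inner ℝ (z - p) (y - p) := by
    rw [← inner_neg_right, neg_sub]
  have h3 : z - p + (p - y) = z - y := by abel
  rw [h3, h2] at key
  nlinarith [sq_nonneg ‖z - p‖]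

lemma aux_proj_norm (z p y : E) (h : (inner ℝ (z - p) (y - p) : ℝ) ≤ 0) :
    ‖p - y‖ ≤ ‖z - y‖ := by
  have := aux_proj_sq z p y h
  nlinarith [norm_nonneg (p - y), norm_nonneg (z - y)]

lemma aux_step (x g p y : E) (η : ℝ)
    (h : (inner ℝ (x + η • g - p) (y - p) : ℝ) ≤ 0) :
    2 * η * (inner ℝ g (y - x) : ℝ) ≤ ‖x - y‖ ^ 2 - ‖p - y‖ ^ 2 + η ^ 2 * ‖g‖ ^ 2 := by
  have h1 := aux_proj_sq (x + η • g) p y h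
  have h3 : x + η • g - y = (x - y) + η • g := by abel
  have h2 : ‖x + η • g - y‖ ^ 2
      = ‖x - y‖ ^ 2 + 2 * (η * (inner ℝ g (x - y) : ℝ)) + η ^ 2 * ‖g‖ ^ 2 := by
    rw [h3, norm_add_sq_real, real_inner_smul_right, real_inner_comm, norm_smul,
      Real.norm_eq_abs, mul_pow, sq_abs]
  have h4 : (inner ℝ g (y - x) : ℝ) = - inner ℝ g (x - y) := by
    rw [← inner_neg_right, neg_sub]
  rw [h2] at h1
  rw [h4]
  nlinarith

end Aux

/-- dynamic regret bound for two-step projected gradient ascent over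
time-varying feasible sets `C_t`, with path length `P` of the comparators:
`Σ_t [(1/2)f_t(x_t*) − f_t(x_t)] ≤ D²/(4η) + D·P/(2η) + η·T·G²/4`, and with the
optimized step size `η = √(D(D+2P)/(T G²))` the regret is at most
`(1/2)·√(D(D+2P)·T·G²)`. -/
theorem dynamic_regret_bound {d : ℕ} (T : ℕ) (hT : 1 ≤ T)
    (C : ℕ → Set (EuclideanSpace ℝ (Fin d)))
    (hC : ∀ t ∈ Finset.Icc 1 T,
      (C t).Nonempty ∧ IsClosed (C t) ∧ Convex ℝ (C t))
    (D G : ℝ)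
    (hdiam : ∀ t ∈ Finset.Icc 1 T, ∀ s ∈ Finset.Icc 1 T,
      ∀ u ∈ C t, ∀ v ∈ C s, ‖u - v‖ ≤ D)
    (f : ℕ → EuclideanSpace ℝ (Fin d) → ℝ)
    (hf : ∀ t ∈ Finset.Icc 1 T, Differentiable ℝ (f t))
    (hgrad : ∀ t ∈ Finset.Icc 1 T, ∀ x ∈ C t, ‖gradient (f t) x‖ ≤ G)
    (hDR : ∀ t ∈ Finset.Icc 1 T, ∀ x ∈ C t, ∀ y ∈ C t,
      (1 / 2) * f t y - f t x ≤ (1 / 2) * (inner ℝ (gradient (f t) x) (y - x) : ℝ))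
    (xstar : ℕ → EuclideanSpace ℝ (Fin d))
    (hxstar : ∀ t ∈ Finset.Icc 1 T, xstar t ∈ C t)
    (P : ℝ)
    (hP : P = ∑ t ∈ Finset.Icc 1 (T - 1), ‖xstar t - xstar (t + 1)‖)
    (η : ℝ) (hη : 0 < η)
    (x xbar : ℕ → EuclideanSpace ℝ (Fin d))
    (hx1 : x 1 ∈ C 1)
    (hproj1 : ∀ t ∈ Finset.Icc 1 T, xbar (t + 1) ∈ C t ∧
      ∀ y ∈ C t,
        (inner ℝ (x t + η • gradient (f t) (x t) - xbar (t + 1)) (y - xbar (t + 1)) : ℝ) ≤ 0)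
    (hproj2 : ∀ t ∈ Finset.Icc 1 (T - 1), x (t + 1) ∈ C (t + 1) ∧
      ∀ y ∈ C (t + 1),
        (inner ℝ (xbar (t + 1) - x (t + 1)) (y - x (t + 1)) : ℝ) ≤ 0) :
    (∑ t ∈ Finset.Icc 1 T, ((1 / 2) * f t (xstar t) - f t (x t)) ≤
        D ^ 2 / (4 * η) + D * P / (2 * η) + η * T * G ^ 2 / 4) ∧
    (0 < G → η = Real.sqrt (D * (D + 2 * P) / (T * G ^ 2)) →
      ∑ t ∈ Finset.Icc 1 T, ((1 / 2) * f t (xstar t) - f t (x t)) ≤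
        (1 / 2) * Real.sqrt (D * (D + 2 * P) * T * G ^ 2)) := by
  obtain ⟨n, hn⟩ : ∃ n, T = n + 1 := ⟨T - 1, by omega⟩
  have h1T : 1 ∈ Finset.Icc 1 T := by simp [Finset.mem_Icc]; omega
  -- basic nonnegativity facts
  have hD0 : 0 ≤ D := by
    obtain ⟨u, hu⟩ := (hC 1 h1T).1
    have := hdiam 1 h1T 1 h1T u hu u hu
    simpa using this
  have hP0 : 0 ≤ P := by
    rw [hP]; exact Finset.sum_nonneg fun t _ => norm_nonneg _
  -- membership of iterates
  have hxmem : ∀ t ∈ Finset.Icc 1 T, x t ∈ C t := by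
    intro t ht
    rw [Finset.mem_Icc] at ht
    rcases Nat.eq_or_lt_of_le ht.1 with h | h
    · rw [← h]; exact hx1
    · have ht' : t - 1 ∈ Finset.Icc 1 (T - 1) := by rw [Finset.mem_Icc]; omega
      have := (hproj2 (t - 1) ht').1
      have he : t - 1 + 1 = t := by omega
      rwa [he] at this
  -- abbreviations
  set a : ℕ → ℝ := fun t => ‖x t - xstar t‖ ^ 2 with ha
  set b : ℕ → ℝ := fun t => ‖xbar (t + 1) - xstar t‖ ^ 2 with hb
  -- per-step bound
  have hstep : ∀ t ∈ Finset.Icc 1 T,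
      4 * η * ((1 / 2) * f t (xstar t) - f t (x t)) ≤ a t - b t + η ^ 2 * G ^ 2 := by
    intro t ht
    have hxt := hxmem t ht
    have hxs := hxstar t ht
    have hdr := hDR t ht (x t) hxt (xstar t) hxs
    have hpe := (hproj1 t ht).2 (xstar t) hxs
    have hs := aux_step (x t) (gradient (f t) (x t)) (xbar (t + 1)) (xstar t) η hpe
    have hg := hgrad t ht (x t) hxt
    have hg2 : ‖gradient (f t) (x t)‖ ^ 2 ≤ G ^ 2 := by
      nlinarith [norm_nonneg (gradient (f t) (x t))]
    simp only [ha, hb]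
    nlinarith [sq_nonneg η]
  -- telescoping bound
  have hab : ∀ t ∈ Finset.Icc 1 (T - 1),
      a (t + 1) - b t ≤ 2 * D * ‖xstar t - xstar (t + 1)‖ := by
    intro t ht
    have ht1 : t ∈ Finset.Icc 1 T := by
      rw [Finset.mem_Icc] at ht ⊢; omega
    have ht2 : t + 1 ∈ Finset.Icc 1 T := by
      rw [Finset.mem_Icc] at ht ⊢; omega
    have hxs1 := hxstar t ht1
    have hxs2 := hxstar (t + 1) ht2
    -- α ≤ ‖xbar(t+1) - xstar(t+1)‖
    have hne : ‖x (t + 1) - xstar (t + 1)‖ ≤ ‖xbar (t + 1) - xstar (t + 1)‖ := by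
      have := (hproj2 t ht).2 (xstar (t + 1)) hxs2
      exact aux_proj_norm _ _ _ this
    have htri : ‖xbar (t + 1) - xstar (t + 1)‖
        ≤ ‖xbar (t + 1) - xstar t‖ + ‖xstar t - xstar (t + 1)‖ := by
      have : xbar (t + 1) - xstar (t + 1)
          = (xbar (t + 1) - xstar t) + (xstar t - xstar (t + 1)) := by abel
      rw [this]; exact norm_add_le _ _
    have hα : ‖x (t + 1) - xstar (t + 1)‖ ≤ D :=
      hdiam (t + 1) ht2 (t + 1) ht2 (x (t + 1)) (hxmem (t + 1) ht2) (xstar (t + 1)) hxs2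
    have hβ : ‖xbar (t + 1) - xstar t‖ ≤ D :=
      hdiam t ht1 t ht1 (xbar (t + 1)) (hproj1 t ht1).1 (xstar t) hxs1
    have h0α := norm_nonneg (x (t + 1) - xstar (t + 1))
    have h0β := norm_nonneg (xbar (t + 1) - xstar t)
    have h0p := norm_nonneg (xstar t - xstar (t + 1))
    simp only [ha, hb]
    nlinarith [mul_nonneg h0p (add_nonneg h0α h0β)]
  have hreidx : ∀ g : ℕ → ℝ, ∑ t ∈ Finset.Icc 1 T, g t = ∑ i ∈ Finset.range T, g (1 + i) := by
    intro g
    rw [← Finset.Ico_add_one_right_eq_Icc, Finset.sum_Ico_eq_sum_range]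
    have he : T + 1 - 1 = T := by omega
    rw [he]
  have hreidx' : ∀ g : ℕ → ℝ,
      ∑ t ∈ Finset.Icc 1 (T - 1), g t = ∑ i ∈ Finset.range n, g (1 + i) := by
    intro g
    rw [← Finset.Ico_add_one_right_eq_Icc, Finset.sum_Ico_eq_sum_range]
    have he : T - 1 + 1 - 1 = n := by omega
    rw [he]
  have htel : ∑ t ∈ Finset.Icc 1 T, (a t - b t) ≤ D ^ 2 + 2 * D * P := by
    have e1 : ∑ t ∈ Finset.Icc 1 T, (a t - b t)
        = a 1 - b T + ∑ i ∈ Finset.range n, (a (1 + i + 1) - b (1 + i)) := by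
      rw [hreidx (fun t => a t - b t), hn]
      rw [Finset.sum_sub_distrib, Finset.sum_range_succ' (fun i => a (1 + i)),
        Finset.sum_range_succ (fun i => b (1 + i))]
      have e2 : ∀ i : ℕ, 1 + (i + 1) = 1 + i + 1 := fun i => by omega
      have e3 : 1 + 0 = 1 := by omega
      have e4 : 1 + n = n + 1 := by omega
      simp only [e2, e3, e4]
      rw [Finset.sum_sub_distrib]
      ring
    have ha1 : a 1 ≤ D ^ 2 := by
      have := hdiam 1 h1T 1 h1T (x 1) hx1 (xstar 1) (hxstar 1 h1T)
      simp only [ha]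
      nlinarith [norm_nonneg (x 1 - xstar 1)]
    have hbT : 0 ≤ b T := sq_nonneg _
    have hsum2 : ∑ i ∈ Finset.range n, (a (1 + i + 1) - b (1 + i))
        ≤ ∑ i ∈ Finset.range n, 2 * D * ‖xstar (1 + i) - xstar (1 + i + 1)‖ := by
      apply Finset.sum_le_sum
      intro i hi
      apply hab
      rw [Finset.mem_Icc]
      rw [Finset.mem_range] at hi
      omega
    have hPsum : ∑ i ∈ Finset.range n, 2 * D * ‖xstar (1 + i) - xstar (1 + i + 1)‖
        = 2 * D * P := by
      rw [hP, hreidx' (fun t => ‖xstar t - xstar (t + 1)‖), Finset.mul_sum]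
    linarith [e1, hsum2, hPsum.le, hPsum.ge]
  -- sum up per-step bounds
  have hmain : 4 * η * (∑ t ∈ Finset.Icc 1 T, ((1 / 2) * f t (xstar t) - f t (x t)))
      ≤ D ^ 2 + 2 * D * P + η ^ 2 * T * G ^ 2 := by
    have h1 : ∑ t ∈ Finset.Icc 1 T, 4 * η * ((1 / 2) * f t (xstar t) - f t (x t))
        ≤ ∑ t ∈ Finset.Icc 1 T, (a t - b t + η ^ 2 * G ^ 2) :=
      Finset.sum_le_sum hstep
    rw [← Finset.mul_sum] at h1
    rw [Finset.sum_add_distrib, Finset.sum_const, Nat.card_Icc, nsmul_eq_mul] at h1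
    have hc : (T + 1 - 1 : ℕ) = T := by omega
    rw [hc] at h1
    push_cast at h1 ⊢
    nlinarith [h1, htel]
  have h4η : (0 : ℝ) < 4 * η := by positivity
  have part1 : ∑ t ∈ Finset.Icc 1 T, ((1 / 2) * f t (xstar t) - f t (x t)) ≤
      D ^ 2 / (4 * η) + D * P / (2 * η) + η * T * G ^ 2 / 4 := by
    have heq : D ^ 2 / (4 * η) + D * P / (2 * η) + η * T * G ^ 2 / 4
        = (D ^ 2 + 2 * D * P + η ^ 2 * T * G ^ 2) / (4 * η) := by
      field_simp
      ring
    rw [heq, le_div_iff₀ h4η]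
    linarith [hmain]
  refine ⟨part1, fun hG hηeq => ?_⟩
  set A := D * (D + 2 * P) with hA
  set B := (T : ℝ) * G ^ 2 with hB
  have hT0 : (0 : ℝ) < (T : ℝ) := by exact_mod_cast Nat.lt_of_lt_of_le Nat.zero_lt_one hT
  have hB0 : 0 < B := by rw [hB]; positivity
  have hA0 : 0 < A := by
    have hs : 0 < A / B := Real.sqrt_pos.mp (hηeq ▸ hη)
    by_contra h
    push_neg at h
    have : A / B ≤ 0 := div_nonpos_of_nonpos_of_nonneg h hB0.le
    linarith
  have hη2 : η ^ 2 * B = A := by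
    rw [hηeq, Real.sq_sqrt (by positivity : (0:ℝ) ≤ A / B)]
    field_simp
  have hsqrt : η * Real.sqrt (A * B) = A := by
    rw [hηeq, ← Real.sqrt_mul (by positivity : (0:ℝ) ≤ A / B)]
    rw [show A / B * (A * B) = A ^ 2 by field_simp]
    exact Real.sqrt_sq hA0.le
  have hABeq : D * (D + 2 * P) * (T : ℝ) * G ^ 2 = A * B := by rw [hA, hB]; ring
  rw [hABeq]
  have hηne : η ≠ 0 := ne_of_gt hη
  rw [hB] at hη2
  rw [hA] at hη2
  have hss : Real.sqrt (A * B) = A / η := by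
    rw [eq_div_iff hηne]
    linarith [hsqrt]
  have hfin : D ^ 2 / (4 * η) + D * P / (2 * η) + η * (T : ℝ) * G ^ 2 / 4
      = (1 / 2) * Real.sqrt (A * B) := by
    rw [hss, hA]
    field_simp
    linear_combination 2 * hη2
  linarith [part1, hfin.le, hfin.ge]
end
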